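/- Let x be a feasible solution to the system A x = b_A, C x = b_C, l ≤ x ≤ u, where restricted to the columns in nisupp(x) = {j : x_j ∉ ℤ}, the matrix A (stacked with C) has the property that the nullity of A restricted to those columns strictly exceeds the rank of C restricted to those columns. Then there exists a nonzero vector g with supp(g) ⊆ nisupp(x), A g = 0, and C g = 0; consequently x is not a vertex of the polyhedron {x : A x = b_A, C x = b_C, l ≤ x ≤ u} unless some coordinate of x in nisupp(x) equals its bound. -/

import Mathlib

/-- If, on the non-integral support of a feasible `x`, the nullity of `A` exceeds the
rank of `C`, then there is a nonzero combined-kernel vector supported there; hence,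
unless some non-integral coordinate sits at a bound, `x` is not a vertex. -/
theorem stmt_19 {mA mC n : ℕ} (A : Matrix (Fin mA) (Fin n) ℚ)
    (C : Matrix (Fin mC) (Fin n) ℚ) (bA : Fin mA → ℚ) (bC : Fin mC → ℚ)
    (l u x : Fin n → ℚ)
    (hxA : A.mulVec x = bA) (hxC : C.mulVec x = bC)
    (hbox : ∀ j, l j ≤ x j ∧ x j ≤ u j)
    (S : Finset (Fin n)) (hS : S = Finset.univ.filter (fun j => (x j).den ≠ 1))
    (hnr : (C.submatrix id (fun j : {j : Fin n // j ∈ S} => j.val)).rank <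
      Module.finrank ℚ
        ↥(LinearMap.ker (A.submatrix id (fun j : {j : Fin n // j ∈ S} => j.val)).mulVecLin)) :
    (∃ g : Fin n → ℚ, g ≠ 0 ∧ (∀ j ∉ S, g j = 0) ∧ A.mulVec g = 0 ∧ C.mulVec g = 0) ∧
      ((∀ j ∈ S, l j < x j ∧ x j < u j) →
        x ∉ Set.extremePoints ℚ
          {z : Fin n → ℚ | A.mulVec z = bA ∧ C.mulVec z = bC ∧
            ∀ j, l j ≤ z j ∧ z j ≤ u j}) := by
  classical
  set AS := A.submatrix id (fun j : {j : Fin n // j ∈ S} => j.val) with hASdef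
  set CS := C.submatrix id (fun j : {j : Fin n // j ∈ S} => j.val) with hCSdef
  -- find nonzero v in combined kernel on S
  obtain ⟨v, hvA, hvC, hv0⟩ : ∃ v : {j : Fin n // j ∈ S} → ℚ,
      AS.mulVec v = 0 ∧ CS.mulVec v = 0 ∧ v ≠ 0 := by
    set K := LinearMap.ker AS.mulVecLin with hK
    set L := CS.mulVecLin.comp K.subtype with hL
    have hrange : LinearMap.range L ≤ LinearMap.range CS.mulVecLin := by
      rintro y ⟨w, rfl⟩; exact ⟨w.val, rfl⟩
    have h1 : Module.finrank ℚ (LinearMap.range L) ≤ CS.rank :=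
      Submodule.finrank_mono hrange
    have h2 : Module.finrank ℚ (LinearMap.range L) + Module.finrank ℚ (LinearMap.ker L)
        = Module.finrank ℚ K := LinearMap.finrank_range_add_finrank_ker L
    have h3 : 0 < Module.finrank ℚ (LinearMap.ker L) := by omega
    obtain ⟨u, hune⟩ := (Module.finrank_pos_iff_exists_ne_zero (R := ℚ) (M := ↥(LinearMap.ker L))).mp h3
    have huK : ((u : ↥(LinearMap.ker L)) : ↥K).val ∈ K := ((u : ↥(LinearMap.ker L)) : ↥K).2
    refine ⟨((u : ↥(LinearMap.ker L)) : ↥K).val, ?_, ?_, ?_⟩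
    · exact huK
    · exact u.2
    · intro h
      exact hune (Subtype.ext (Subtype.ext h))
  set g : Fin n → ℚ := fun j => if h : j ∈ S then v ⟨j, h⟩ else 0 with hg
  have hgS : ∀ j ∉ S, g j = 0 := fun j hj => dif_neg hj
  have hmul : ∀ {m : ℕ} (M : Matrix (Fin m) (Fin n) ℚ),
      M.mulVec g = (M.submatrix id (fun j : {j : Fin n // j ∈ S} => j.val)).mulVec v := by
    intro m M
    funext i
    show ∑ j, M i j * g j = ∑ j : {j : Fin n // j ∈ S}, M i j.val * v j
    have e1 : ∀ j : {j : Fin n // j ∈ S}, v j = g j.val := by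
      intro j
      simp [hg, j.2]
    calc ∑ j : Fin n, M i j * g j
        = ∑ j ∈ S, M i j * g j :=
          (Finset.sum_subset (Finset.subset_univ S)
            (fun j _ hj => by rw [hgS j hj, mul_zero])).symm
      _ = ∑ j ∈ S.attach, M i j.val * g j.val := (Finset.sum_attach S _).symm
      _ = ∑ j : {j : Fin n // j ∈ S}, M i j.val * v j :=
          Finset.sum_congr rfl (fun j _ => by rw [e1])
  have hg0 : g ≠ 0 := by
    obtain ⟨j, hj⟩ := Function.ne_iff.mp hv0
    intro h
    apply hj
    have := congrFun h j.val
    simpa [hg, j.2] using this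
  have hAg : A.mulVec g = 0 := by rw [hmul A]; exact hvA
  have hCg : C.mulVec g = 0 := by rw [hmul C]; exact hvC
  refine ⟨⟨g, hg0, hgS, hAg, hCg⟩, ?_⟩
  intro hint hx
  obtain ⟨j₀, hj₀⟩ := Function.ne_iff.mp hg0
  -- choose epsilon
  set f : Fin n → ℚ := fun j => if g j = 0 then 1
    else min ((x j - l j) / |g j|) ((u j - x j) / |g j|) with hf
  have hfpos : ∀ j, 0 < f j := by
    intro j
    by_cases h : g j = 0
    · simp [hf, h]
    · have hjS : j ∈ S := by by_contra hc; exact h (hgS j hc)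
      obtain ⟨h1, h2⟩ := hint j hjS
      have hgpos : 0 < |g j| := abs_pos.mpr h
      simp only [hf, h, if_false]
      exact lt_min (div_pos (by linarith) hgpos) (div_pos (by linarith) hgpos)
  have hne : (Finset.univ : Finset (Fin n)).Nonempty := ⟨j₀, Finset.mem_univ _⟩
  set ε : ℚ := Finset.univ.inf' hne f with hε
  have hεpos : 0 < ε := (Finset.lt_inf'_iff hne).mpr fun j _ => hfpos j
  have hεle : ∀ j, ε * |g j| ≤ x j - l j ∧ ε * |g j| ≤ u j - x j := by
    intro j
    by_cases h : g j = 0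
    · simp [h]
      exact ⟨(hbox j).1, (hbox j).2⟩
    · have hgpos : 0 < |g j| := abs_pos.mpr h
      have hle : ε ≤ f j := Finset.inf'_le _ (Finset.mem_univ j)
      have hfj : f j = min ((x j - l j) / |g j|) ((u j - x j) / |g j|) := if_neg h
      rw [hfj] at hle
      have h1 : ε ≤ (x j - l j) / |g j| := le_trans hle (min_le_left _ _)
      have h2 : ε ≤ (u j - x j) / |g j| := le_trans hle (min_le_right _ _)
      constructor
      · calc ε * |g j| ≤ ((x j - l j) / |g j|) * |g j| := by
              exact mul_le_mul_of_nonneg_right h1 hgpos.le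
          _ = x j - l j := div_mul_cancel₀ _ hgpos.ne'
      · calc ε * |g j| ≤ ((u j - x j) / |g j|) * |g j| := by
              exact mul_le_mul_of_nonneg_right h2 hgpos.le
          _ = u j - x j := div_mul_cancel₀ _ hgpos.ne'
  have hbnd : ∀ (s : ℚ), |s| = 1 → ∀ j, l j ≤ x j + (s * ε) * g j ∧ x j + (s * ε) * g j ≤ u j := by
    intro s hs j
    have h1 := (hεle j).1
    have h2 := (hεle j).2
    have habs : |(s * ε) * g j| = ε * |g j| := by
      rw [abs_mul, abs_mul, hs, one_mul, abs_of_pos hεpos]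
    have h3 : -(ε * |g j|) ≤ (s * ε) * g j := (abs_le.mp habs.le).1
    have h4 : (s * ε) * g j ≤ ε * |g j| := (abs_le.mp habs.le).2
    constructor <;> linarith
  set y₁ : Fin n → ℚ := x + ε • g with hy₁
  set y₂ : Fin n → ℚ := x - ε • g with hy₂
  have hmem₁ : y₁ ∈ {z : Fin n → ℚ | A.mulVec z = bA ∧ C.mulVec z = bC ∧
      ∀ j, l j ≤ z j ∧ z j ≤ u j} := by
    refine ⟨?_, ?_, ?_⟩
    · rw [hy₁, Matrix.mulVec_add, Matrix.mulVec_smul, hAg, hxA]; simp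
    · rw [hy₁, Matrix.mulVec_add, Matrix.mulVec_smul, hCg, hxC]; simp
    · intro j
      have := hbnd 1 (by norm_num) j
      simpa [hy₁, one_mul] using this
  have hmem₂ : y₂ ∈ {z : Fin n → ℚ | A.mulVec z = bA ∧ C.mulVec z = bC ∧
      ∀ j, l j ≤ z j ∧ z j ≤ u j} := by
    refine ⟨?_, ?_, ?_⟩
    · rw [hy₂, Matrix.mulVec_sub, Matrix.mulVec_smul, hAg, hxA]; simp
    · rw [hy₂, Matrix.mulVec_sub, Matrix.mulVec_smul, hCg, hxC]; simp
    · intro j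
      have := hbnd (-1) (by norm_num) j
      have h : x j + (-1 * ε) * g j = y₂ j := by simp [hy₂]; ring
      rw [h] at this
      exact this
  have hseg : x ∈ openSegment ℚ y₁ y₂ := by
    refine ⟨1/2, 1/2, by norm_num, by norm_num, by norm_num, ?_⟩
    rw [hy₁, hy₂]
    module
  have := hx.2 hmem₁ hmem₂ hseg
  rw [hy₁] at this
  have h0 : ε • g = 0 := by
    have := congrArg (· - x) this
    simpa [add_sub_cancel_left] using this
  rcases smul_eq_zero.mp h0 with h | h
  · exact hεpos.ne' h
  · exact hg0 h
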